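/- Let T be a partial isometry (a contraction with T T* T = T) on a complex Hilbert space H, and let T₁, T₂ be contractions on H. Suppose there exist bounded operators F₁, F₂ on the defect space 𝒟_T = ker T such that T₁ − T₂*T = D_T F₁ D_T and T₂ − T₁*T = D_T F₂ D_T. Then F₁F₂ = F₂F₁ if and only if T₁T₂x = T₂T₁x for every x ∈ ker T. -/

import Mathlib

/- Common definitions: the tetrablock, tetrablock contractions, defect operators and
defect spaces, fundamental operators, tetrablock isometries and tetrablock-isometric lifts. -/

noncomputable section

open ContinuousLinearMap

universe u

/-- The tetrablock domain `𝔼 ⊆ ℂ³`: points `(x₁,x₂,x₃)` of the form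
`(a₁₁, a₂₂, det A)` for some `2×2` complex matrix `A` of operator norm `< 1`. -/
def tetrablock : Set (Fin 3 → ℂ) :=
  {x | ∃ A : Matrix (Fin 2) (Fin 2) ℂ,
    ‖Matrix.toEuclideanCLM (𝕜 := ℂ) A‖ < 1 ∧ x 0 = A 0 0 ∧ x 1 = A 1 1 ∧ x 2 = A.det}

variable {H : Type u} [NormedAddCommGroup H] [InnerProductSpace ℂ H] [CompleteSpace H]

/-- Evaluation `p(T₁,T₂,T)` of a three-variable polynomial at a (commuting) operator
triple: substitute `T₁,T₂,T` monomial-wise (order is immaterial for commuting triples). -/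
def polyEval (T₁ T₂ T : H →L[ℂ] H) (p : MvPolynomial (Fin 3) ℂ) : H →L[ℂ] H :=
  p.support.sum fun m => p.coeff m • (T₁ ^ m 0 * T₂ ^ m 1 * T ^ m 2)

/-- A tetrablock contraction: a commuting triple for which the closed tetrablock is a
spectral set. -/
def IsTetrablockContraction (T₁ T₂ T : H →L[ℂ] H) : Prop :=
  Commute T₁ T₂ ∧ Commute T₁ T ∧ Commute T₂ T ∧
  ∀ p : MvPolynomial (Fin 3) ℂ,
    ‖polyEval T₁ T₂ T p‖ ≤
      sSup {y : ℝ | ∃ x ∈ closure tetrablock, y = ‖MvPolynomial.eval x p‖}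

/-- The defect operator `D_T = (I - T*T)^{1/2}` of a contraction `T`. -/
def defect (T : H →L[ℂ] H) : H →L[ℂ] H := CFC.sqrt (1 - adjoint T * T)

/-- The defect space `𝒟_T`, the closure of the range of `D_T`. -/
def defectSpace (T : H →L[ℂ] H) : Submodule ℂ H :=
  (LinearMap.range (defect T : H →ₗ[ℂ] H)).topologicalClosure

lemma defect_mem (T : H →L[ℂ] H) (h : H) : defect T h ∈ defectSpace T :=
  Submodule.le_topologicalClosure _ ⟨h, rfl⟩

/-- The defect operator `D_T`, viewed as a map from `H` into the defect space `𝒟_T`. -/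
def defectTo (T : H →L[ℂ] H) : H →L[ℂ] defectSpace T :=
  (defect T).codRestrict _ (defect_mem T)

instance (T : H →L[ℂ] H) : CompleteSpace (defectSpace T) :=
  (Submodule.isClosed_topologicalClosure _).completeSpace_coe

/-- `F₁, F₂` are fundamental operators for `(T₁,T₂,T)`:
`T₁ - T₂* T = D_T F₁ D_T` and `T₂ - T₁* T = D_T F₂ D_T`. -/
def AreFundamentalOps (T₁ T₂ T : H →L[ℂ] H)
    (F₁ F₂ : defectSpace T →L[ℂ] defectSpace T) : Prop :=
  T₁ - adjoint T₂ * T = (defectSpace T).subtypeL ∘L F₁ ∘L defectTo T ∧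
  T₂ - adjoint T₁ * T = (defectSpace T).subtypeL ∘L F₂ ∘L defectTo T

/-- A tetrablock isometry: a commuting triple `(V₁,V₂,V)` with `V` an isometry,
`‖V₂‖ ≤ 1` and `V₁ = V₂* V`. -/
def IsTetrablockIsometry {K : Type u} [NormedAddCommGroup K] [InnerProductSpace ℂ K]
    [CompleteSpace K] (V₁ V₂ V : K →L[ℂ] K) : Prop :=
  Commute V₁ V₂ ∧ Commute V₁ V ∧ Commute V₂ V ∧
    adjoint V * V = 1 ∧ ‖V₂‖ ≤ 1 ∧ V₁ = adjoint V₂ * V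

/-- `(T₁,T₂,T)` has a tetrablock-isometric lift: a tetrablock isometry `(V₁,V₂,V)` on a
space `K ⊇ H` whose adjoints extend the adjoints of `T₁,T₂,T`. -/
def HasTetrablockIsometricLift (T₁ T₂ T : H →L[ℂ] H) : Prop :=
  ∃ (K : Type u) (_ : NormedAddCommGroup K) (_ : InnerProductSpace ℂ K) (_ : CompleteSpace K)
    (ι : H →ₗᵢ[ℂ] K) (V₁ V₂ V : K →L[ℂ] K),
      IsTetrablockIsometry V₁ V₂ V ∧
      (∀ h : H, adjoint V₁ (ι h) = ι (adjoint T₁ h)) ∧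
      (∀ h : H, adjoint V₂ (ι h) = ι (adjoint T₂ h)) ∧
      (∀ h : H, adjoint V (ι h) = ι (adjoint T h))


section Aux

set_option maxHeartbeats 800000
set_option synthInstance.maxHeartbeats 400000

lemma defect_eq_of_pi (T : H →L[ℂ] H) (hpi : T * adjoint T * T = T) :
    defect T = 1 - adjoint T * T := by
  have hA : adjoint T * T * (adjoint T * T) = adjoint T * T := by
    have := congrArg (fun S => adjoint T * S) hpi
    simpa [mul_assoc] using this
  have hidem : (1 - adjoint T * T) * (1 - adjoint T * T) = 1 - adjoint T * T := by
    simp only [mul_sub, sub_mul, one_mul, mul_one, hA]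
    abel
  have hsa : IsSelfAdjoint (1 - adjoint T * T) := by
    rw [IsSelfAdjoint]
    simp [star_sub, star_mul, star_eq_adjoint, adjoint_adjoint]
  have hpos : (0 : H →L[ℂ] H) ≤ 1 - adjoint T * T := by
    calc (0 : H →L[ℂ] H) ≤ star (1 - adjoint T * T) * (1 - adjoint T * T) :=
          star_mul_self_nonneg _
      _ = 1 - adjoint T * T := by rw [hsa.star_eq, hidem]
  unfold defect
  conv_lhs => rw [← hidem]
  rw [← sq]
  exact CFC.sqrt_sq _ hpos

lemma defect_apply_ker (T : H →L[ℂ] H) (hpi : T * adjoint T * T = T)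
    {x : H} (hx : T x = 0) : defect T x = x := by
  rw [defect_eq_of_pi T hpi]
  simp [sub_apply, mul_apply, hx]

lemma mem_defectSpace_of_ker (T : H →L[ℂ] H) (hpi : T * adjoint T * T = T)
    {x : H} (hx : T x = 0) : x ∈ defectSpace T := by
  have := defect_mem T x
  rwa [defect_apply_ker T hpi hx] at this

lemma defectSpace_le_ker (T : H →L[ℂ] H) (hpi : T * adjoint T * T = T) :
    defectSpace T ≤ LinearMap.ker (T : H →ₗ[ℂ] H) := by
  have hTD : T * defect T = 0 := by
    rw [defect_eq_of_pi T hpi]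
    rw [mul_sub, mul_one, ← mul_assoc, hpi, sub_self]
  have hr : LinearMap.range (defect T : H →ₗ[ℂ] H) ≤ LinearMap.ker (T : H →ₗ[ℂ] H) := by
    rintro _ ⟨y, rfl⟩
    have : (T * defect T) y = 0 := by rw [hTD]; rfl
    simpa [mul_apply] using this
  exact Submodule.topologicalClosure_minimal _ hr (ContinuousLinearMap.isClosed_ker T)

lemma fundamental_apply (T S A : H →L[ℂ] H) (hpi : T * adjoint T * T = T)
    (F : defectSpace T →L[ℂ] defectSpace T)
    (hF : A - adjoint S * T = (defectSpace T).subtypeL ∘L F ∘L defectTo T)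
    {x : H} (hx : T x = 0) (hmem : x ∈ defectSpace T) :
    A x = (F ⟨x, hmem⟩ : H) := by
  have h := congrArg (fun W : H →L[ℂ] H => W x) hF
  simp only [sub_apply, mul_apply, hx, map_zero, sub_zero, comp_apply] at h
  have hd : defectTo T x = ⟨x, hmem⟩ := by
    apply Subtype.ext
    show defect T x = x
    exact defect_apply_ker T hpi hx
  rw [hd] at h
  simpa [ContinuousLinearMap.mul_apply, hx] using h

end Aux

/-- under the hypotheses of Statement 13, `F₁F₂ = F₂F₁` if and only if
`T₁T₂x = T₂T₁x` for every `x ∈ ker T`. -/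
theorem fundamentalOps_commute_iff_restriction_commute
    (T T₁ T₂ : H →L[ℂ] H) (hT : ‖T‖ ≤ 1) (hpi : T * adjoint T * T = T)
    (h1 : ‖T₁‖ ≤ 1) (h2 : ‖T₂‖ ≤ 1)
    (F₁ F₂ : defectSpace T →L[ℂ] defectSpace T)
    (hF₁ : T₁ - adjoint T₂ * T = (defectSpace T).subtypeL ∘L F₁ ∘L defectTo T)
    (hF₂ : T₂ - adjoint T₁ * T = (defectSpace T).subtypeL ∘L F₂ ∘L defectTo T) :
    F₁ * F₂ = F₂ * F₁ ↔ ∀ x ∈ LinearMap.ker (T : H →ₗ[ℂ] H), T₁ (T₂ x) = T₂ (T₁ x) := by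
  have hle := defectSpace_le_ker T hpi
  constructor
  · intro hc x hx
    have hx0 : T x = 0 := hx
    have hmem : x ∈ defectSpace T := mem_defectSpace_of_ker T hpi hx0
    have e2 : T₂ x = (F₂ ⟨x, hmem⟩ : H) := fundamental_apply T T₁ T₂ hpi F₂ hF₂ hx0 hmem
    have e1 : T₁ x = (F₁ ⟨x, hmem⟩ : H) := fundamental_apply T T₂ T₁ hpi F₁ hF₁ hx0 hmem
    have hmem2 : T₂ x ∈ defectSpace T := e2 ▸ (F₂ ⟨x, hmem⟩).2
    have hmem1 : T₁ x ∈ defectSpace T := e1 ▸ (F₁ ⟨x, hmem⟩).2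
    have hx2 : T (T₂ x) = 0 := hle hmem2
    have hx1 : T (T₁ x) = 0 := hle hmem1
    have e12 : T₁ (T₂ x) = (F₁ ⟨T₂ x, hmem2⟩ : H) :=
      fundamental_apply T T₂ T₁ hpi F₁ hF₁ hx2 hmem2
    have e21 : T₂ (T₁ x) = (F₂ ⟨T₁ x, hmem1⟩ : H) :=
      fundamental_apply T T₁ T₂ hpi F₂ hF₂ hx1 hmem1
    have k2 : (⟨T₂ x, hmem2⟩ : defectSpace T) = F₂ ⟨x, hmem⟩ := Subtype.ext e2
    have k1 : (⟨T₁ x, hmem1⟩ : defectSpace T) = F₁ ⟨x, hmem⟩ := Subtype.ext e1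
    rw [e12, e21, k1, k2]
    have := congrArg (fun W : defectSpace T →L[ℂ] defectSpace T => (W ⟨x, hmem⟩ : H)) hc
    simpa [mul_apply] using this
  · intro hc
    ext z
    obtain ⟨x, hmem⟩ := z
    have hx0 : T x = 0 := hle hmem
    have e2 : T₂ x = (F₂ ⟨x, hmem⟩ : H) := fundamental_apply T T₁ T₂ hpi F₂ hF₂ hx0 hmem
    have e1 : T₁ x = (F₁ ⟨x, hmem⟩ : H) := fundamental_apply T T₂ T₁ hpi F₁ hF₁ hx0 hmem
    have hmem2 : T₂ x ∈ defectSpace T := e2 ▸ (F₂ ⟨x, hmem⟩).2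
    have hmem1 : T₁ x ∈ defectSpace T := e1 ▸ (F₁ ⟨x, hmem⟩).2
    have hx2 : T (T₂ x) = 0 := hle hmem2
    have hx1 : T (T₁ x) = 0 := hle hmem1
    have e12 : T₁ (T₂ x) = (F₁ ⟨T₂ x, hmem2⟩ : H) :=
      fundamental_apply T T₂ T₁ hpi F₁ hF₁ hx2 hmem2
    have e21 : T₂ (T₁ x) = (F₂ ⟨T₁ x, hmem1⟩ : H) :=
      fundamental_apply T T₁ T₂ hpi F₂ hF₂ hx1 hmem1
    have k2 : (⟨T₂ x, hmem2⟩ : defectSpace T) = F₂ ⟨x, hmem⟩ := Subtype.ext e2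
    have k1 : (⟨T₁ x, hmem1⟩ : defectSpace T) = F₁ ⟨x, hmem⟩ := Subtype.ext e1
    have hcm : T₁ (T₂ x) = T₂ (T₁ x) := hc x hx0
    show ((F₁ * F₂) ⟨x, hmem⟩ : H) = ((F₂ * F₁) ⟨x, hmem⟩ : H)
    simp only [ContinuousLinearMap.mul_apply]
    rw [← k1, ← k2, ← e12, ← e21, hcm]
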